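/- Let X be a locally compact topological space, Y a Hausdorff uniform space, and equip C(X,Y) with the topology of uniform convergence τ_uc. If a subfamily F ⊆ C(X,Y) is relatively τ_uc-compact, then F satisfies the extension property. -/

import Mathlib

open Set Filter Topology
open scoped UniformConvergence

/-- If a family `F` of continuous maps from a locally compact space `X` to a Hausdorff
uniform space `Y` is relatively compact for the topology of uniform convergence, then
`F` satisfies the extension property. -/
theorem extensionProperty_of_relativelyCompact_uniformConvergence
    {X Y : Type*} [TopologicalSpace X] [WeaklyLocallyCompactSpace X]
    [UniformSpace Y] [T2Space Y]
    (F : Set (X →ᵤ Y)) (hF : ∀ f ∈ F, Continuous (UniformFun.toFun f))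
    (hcomp : IsCompact (closure F)) :
    ∀ V ∈ uniformity Y, ∃ D : Set X, IsCompact D ∧ ∃ U ∈ uniformity Y,
      ∀ f ∈ F, ∀ g ∈ F,
        (∀ x ∈ D, (UniformFun.toFun f x, UniformFun.toFun g x) ∈ U) →
        ∀ x : X, (UniformFun.toFun f x, UniformFun.toFun g x) ∈ V := by
  classical
  intro V hV
  rcases isEmpty_or_nonempty X with hX | hX
  · exact ⟨∅, isCompact_empty, V, hV, fun f _ g _ _ x => (IsEmpty.false x).elim⟩
  -- Choose a symmetric entourage `W` such that five `W`-steps land in `V`.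
  obtain ⟨w, hw, hwsymm, hwV⟩ := comp_comp_symm_mem_uniformity_sets hV
  obtain ⟨W, hW, hWsymm, hWw⟩ := comp_symm_mem_uniformity_sets hw
  have hWsub : W ⊆ w := fun p hp =>
    hWw (SetRel.prodMk_mem_comp hp (refl_mem_uniformity hW))
  have chain5 : ∀ a b c d e g : Y, (a, b) ∈ W → (b, c) ∈ W → (c, d) ∈ W →
      (d, e) ∈ W → (e, g) ∈ W → (a, g) ∈ V := by
    intro a b c d e g h1 h2 h3 h4 h5
    exact hwV (SetRel.prodMk_mem_comp
      (SetRel.prodMk_mem_comp (hWw (SetRel.prodMk_mem_comp h1 h2))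
        (hWw (SetRel.prodMk_mem_comp h3 h4))) (hWsub h5))
  -- Total boundedness gives a finite `W`-net for `F`.
  have hgen : UniformFun.gen X Y W ∈ uniformity (X →ᵤ Y) :=
    (UniformFun.hasBasis_uniformity X Y).mem_of_mem hW
  obtain ⟨T, hTfin, hTsub⟩ := hcomp.totallyBounded (UniformFun.gen X Y W) hgen
  -- Witness points for pairs of net elements that are not uniformly close.
  set P : (X →ᵤ Y) × (X →ᵤ Y) → Prop := fun p =>
    ∃ x : X, ¬ ∃ c d, (UniformFun.toFun p.1 x, c) ∈ W ∧ (c, d) ∈ W ∧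
      (d, UniformFun.toFun p.2 x) ∈ W with hP
  set wit : (X →ᵤ Y) × (X →ᵤ Y) → X := fun p =>
    if h : P p then h.choose else hX.some with hwit
  refine ⟨wit '' (T ×ˢ T), ((hTfin.prod hTfin).image wit).isCompact, W, hW, ?_⟩
  intro f hf g hg hfg x
  have hfT := hTsub (subset_closure hf)
  have hgT := hTsub (subset_closure hg)
  simp only [mem_iUnion, mem_setOf_eq, exists_prop] at hfT hgT
  obtain ⟨i, hi, hfi⟩ := hfT
  obtain ⟨j, hj, hgj⟩ := hgT
  -- `i` and `j` are uniformly `W³`-close: otherwise the witness point gives a contradiction.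
  have good : ¬ P (i, j) := by
    intro hPij
    have hwitval : wit (i, j) = hPij.choose := dif_pos hPij
    have hmem : wit (i, j) ∈ wit '' (T ×ˢ T) :=
      mem_image_of_mem wit (mk_mem_prod hi hj)
    have hclose := hfg _ hmem
    rw [hwitval] at hclose
    exact hPij.choose_spec ⟨UniformFun.toFun f hPij.choose, UniformFun.toFun g hPij.choose,
      hWsymm.symm _ _ (hfi hPij.choose), hclose, hgj hPij.choose⟩
  obtain ⟨c, d, h1, h2, h3⟩ := not_not.mp (fun hx => good ⟨x, hx⟩)
  exact chain5 _ _ c d _ _ (hfi x) h1 h2 h3 (hWsymm.symm _ _ (hgj x))
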